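/- Self-mapping estimate for the fixed-point iteration: with notation as in the local inversion setup, if for all z in the closed ball of radius η around β one has Σ_{|k|=2} ‖F'(β)^{-1}‖ · (max_{B}|F^{(k)}|/k!) · η^{|k|−1} ≤ 1−σ (the contraction-type bound on the Taylor remainder), then ‖w − F(β)‖ ≤ σηλ_F(β) implies that g_w maps the closed ball cl(B_η(β)) into itself, where λ_F(β) is the smallest singular value of F'(β). -/
import Mathlib


open scoped BigOperators
open Metric

set_option maxHeartbeats 1000000

/-- The finite set of multiindices `α` on `Fin (m+1)` with `|α| = 2`. -/
noncomputable def multiindicesDegTwo (m : ℕ) : Finset (Fin (m + 1) → ℕ) :=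
  ((Finset.univ : Finset (Fin (m + 1) → Fin 3)).image (fun g i => (g i : ℕ))).filter
    (fun α => ∑ i, α i = 2)

/-- Self-mapping estimate for the fixed-point iteration: suppose the order-2 Taylor
remainder coefficients `R_α` of `F` at `β` satisfy `‖R_α(z)‖ ≤ C α` on the closed ball of
radius `η` around `β` (where `C α` stands for `max_B ‖F^{(α)}‖ / α!`), and suppose the
contraction-type bound `Σ_{|α|=2} ‖F'(β)⁻¹‖ · C α · η^{|α|−1} ≤ 1 − σ` holds. Then for
every `w` with `‖w − F(β)‖ ≤ σ·η·λ_F(β)` (where `λ_F(β) = ‖F'(β)⁻¹‖_op⁻¹` is the smallest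
singular value of `F'(β)`), the map
`g_w(z) = F'(β)⁻¹(w − F(β)) + β − Σ_{|α|=2} (z−β)^α • F'(β)⁻¹ R_α(z)`
maps the closed ball `closedBall β η` into itself. -/
theorem gw_maps_ball_to_ball {m : ℕ}
    (F : EuclideanSpace ℝ (Fin (m + 1)) → EuclideanSpace ℝ (Fin (m + 1)))
    (β : EuclideanSpace ℝ (Fin (m + 1)))
    (A : EuclideanSpace ℝ (Fin (m + 1)) ≃L[ℝ] EuclideanSpace ℝ (Fin (m + 1)))
    (hA : (A : EuclideanSpace ℝ (Fin (m + 1)) →L[ℝ] EuclideanSpace ℝ (Fin (m + 1))) =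
      fderiv ℝ F β)
    (σ : ℝ) (hσ : σ ∈ Set.Ioo (0 : ℝ) 1) (η : ℝ) (hη : 0 < η)
    (R : (Fin (m + 1) → ℕ) → EuclideanSpace ℝ (Fin (m + 1)) → EuclideanSpace ℝ (Fin (m + 1)))
    (C : (Fin (m + 1) → ℕ) → ℝ)
    (hR : ∀ α ∈ multiindicesDegTwo m, ∀ z ∈ closedBall β η, ‖R α z‖ ≤ C α)
    (hsum : ∑ α ∈ multiindicesDegTwo m,
      ‖(A.symm : EuclideanSpace ℝ (Fin (m + 1)) →L[ℝ] EuclideanSpace ℝ (Fin (m + 1)))‖ *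
        C α * η ^ ((∑ i, α i) - 1) ≤ 1 - σ)
    (lam : ℝ)
    (hlam : lam =
      ‖(A.symm : EuclideanSpace ℝ (Fin (m + 1)) →L[ℝ] EuclideanSpace ℝ (Fin (m + 1)))‖⁻¹)
    (g : EuclideanSpace ℝ (Fin (m + 1)) → EuclideanSpace ℝ (Fin (m + 1)) →
      EuclideanSpace ℝ (Fin (m + 1)))
    (hg : ∀ w z, g w z = A.symm (w - F β) + β -
      ∑ α ∈ multiindicesDegTwo m, (∏ i, (z i - β i) ^ α i) • A.symm (R α z)) :
    ∀ w, ‖w - F β‖ ≤ σ * η * lam →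
      Set.MapsTo (g w) (closedBall β η) (closedBall β η) := by
  obtain ⟨hσ0, hσ1⟩ := hσ
  intro w hw z hz
  have hzη : ‖z - β‖ ≤ η := by rwa [mem_closedBall, dist_eq_norm] at hz
  set K := ‖(A.symm : EuclideanSpace ℝ (Fin (m + 1)) →L[ℝ] EuclideanSpace ℝ (Fin (m + 1)))‖
    with hKdef
  have hKpos : 0 < K := by
    rw [hKdef]
    rw [norm_pos_iff]
    intro h
    have hx : (EuclideanSpace.single 0 1 : EuclideanSpace ℝ (Fin (m + 1))) =
        (A.symm : EuclideanSpace ℝ (Fin (m + 1)) →L[ℝ] EuclideanSpace ℝ (Fin (m + 1)))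
          (A (EuclideanSpace.single 0 1)) := by simp
    rw [h] at hx
    simpa using congrArg (fun v => v 0) hx
  -- coordinate bound
  have hcoord : ∀ i : Fin (m + 1), |z i - β i| ≤ ‖z - β‖ := by
    intro i
    have : |(z - β) i| ≤ ‖z - β‖ := by
      rw [EuclideanSpace.norm_eq, ← Real.sqrt_sq_eq_abs]
      simp only [Real.norm_eq_abs, sq_abs]
      exact Real.sqrt_le_sqrt
        (Finset.single_le_sum (fun j _ => sq_nonneg ((z - β) j)) (Finset.mem_univ i))
    simpa using this
  -- first term bound
  have h1 : ‖A.symm (w - F β)‖ ≤ σ * η := by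
    calc ‖A.symm (w - F β)‖ ≤ K * ‖w - F β‖ :=
          ContinuousLinearMap.le_opNorm
            (A.symm : EuclideanSpace ℝ (Fin (m + 1)) →L[ℝ] EuclideanSpace ℝ (Fin (m + 1)))
            (w - F β)
      _ ≤ K * (σ * η * K⁻¹) := by
          apply mul_le_mul_of_nonneg_left _ hKpos.le
          rwa [hlam] at hw
      _ = σ * η := by
          rw [mul_comm K, mul_assoc, inv_mul_cancel₀ hKpos.ne', mul_one]
  -- per-term bound for the sum
  have hterm : ∀ α ∈ multiindicesDegTwo m,
      ‖(∏ i, (z i - β i) ^ α i) • A.symm (R α z)‖ ≤ K * C α * η ^ ((∑ i, α i) - 1) * η := by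
    intro α hα
    have hα2 : ∑ i, α i = 2 := (Finset.mem_filter.mp hα).2
    have hC : 0 ≤ C α := le_trans (norm_nonneg _) (hR α hα β (mem_closedBall_self hη.le))
    have hprod : |∏ i, (z i - β i) ^ α i| ≤ η ^ 2 := by
      calc |∏ i, (z i - β i) ^ α i| = ∏ i, |z i - β i| ^ α i := by
            rw [Finset.abs_prod]; exact Finset.prod_congr rfl (fun i _ => abs_pow _ _)
        _ ≤ ∏ i, η ^ α i := by
            apply Finset.prod_le_prod (fun i _ => pow_nonneg (abs_nonneg _) _)
            intro i _
            exact pow_le_pow_left₀ (abs_nonneg _) ((hcoord i).trans hzη) _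
        _ = η ^ (∑ i, α i) := by rw [Finset.prod_pow_eq_pow_sum]
        _ = η ^ 2 := by rw [hα2]
    have hRz : ‖A.symm (R α z)‖ ≤ K * C α :=
      le_trans (ContinuousLinearMap.le_opNorm
          (A.symm : EuclideanSpace ℝ (Fin (m + 1)) →L[ℝ] EuclideanSpace ℝ (Fin (m + 1)))
          (R α z))
        (mul_le_mul_of_nonneg_left (hR α hα z hz) hKpos.le)
    calc ‖(∏ i, (z i - β i) ^ α i) • A.symm (R α z)‖
        = |∏ i, (z i - β i) ^ α i| * ‖A.symm (R α z)‖ := by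
          rw [norm_smul, Real.norm_eq_abs]
      _ ≤ η ^ 2 * (K * C α) := by
          apply mul_le_mul hprod hRz (norm_nonneg _) (by positivity)
      _ = K * C α * η ^ ((∑ i, α i) - 1) * η := by rw [hα2]; ring
  -- sum bound
  have h2 : ‖∑ α ∈ multiindicesDegTwo m, (∏ i, (z i - β i) ^ α i) • A.symm (R α z)‖
      ≤ (1 - σ) * η := by
    calc ‖∑ α ∈ multiindicesDegTwo m, (∏ i, (z i - β i) ^ α i) • A.symm (R α z)‖
        ≤ ∑ α ∈ multiindicesDegTwo m, ‖(∏ i, (z i - β i) ^ α i) • A.symm (R α z)‖ :=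
          norm_sum_le _ _
      _ ≤ ∑ α ∈ multiindicesDegTwo m, K * C α * η ^ ((∑ i, α i) - 1) * η :=
          Finset.sum_le_sum hterm
      _ = (∑ α ∈ multiindicesDegTwo m, K * C α * η ^ ((∑ i, α i) - 1)) * η := by
          rw [Finset.sum_mul]
      _ ≤ (1 - σ) * η := mul_le_mul_of_nonneg_right hsum hη.le
  rw [mem_closedBall, dist_eq_norm, hg]
  have : A.symm (w - F β) + β -
      (∑ α ∈ multiindicesDegTwo m, (∏ i, (z i - β i) ^ α i) • A.symm (R α z)) - β =
      A.symm (w - F β) -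
      (∑ α ∈ multiindicesDegTwo m, (∏ i, (z i - β i) ^ α i) • A.symm (R α z)) := by
    abel
  rw [this]
  calc ‖A.symm (w - F β) -
        ∑ α ∈ multiindicesDegTwo m, (∏ i, (z i - β i) ^ α i) • A.symm (R α z)‖
      ≤ ‖A.symm (w - F β)‖ +
        ‖∑ α ∈ multiindicesDegTwo m, (∏ i, (z i - β i) ^ α i) • A.symm (R α z)‖ :=
        norm_sub_le _ _
    _ ≤ σ * η + (1 - σ) * η := add_le_add h1 h2
    _ = η := by ring
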